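/- For any two bases A and B of a matroid and any element e in A \ B, there exists an element f in B \ A such that both A - e + f and B + e - f are bases (symmetric exchange property). -/

import Mathlib

open Set

theorem symmetric_exchange_property {α : Type*} (M : Matroid α) (A B : Set α)
    (hA : M.IsBase A) (hB : M.IsBase B) (e : α) (he : e ∈ A \ B) :
    ∃ f ∈ B \ A, M.IsBase (insert f (A \ {e})) ∧ M.IsBase ((insert e B) \ {f}) := by
  have heE : e ∈ M.E := hA.subset_ground he.1
  have hAe : M.Indep (A \ {e}) := hA.indep.subset diff_subset
  -- `e` is not in the closure of `A \ {e}`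
  have heX : e ∉ M.closure (A \ {e}) := hA.indep.notMem_closure_sdiff_of_mem he.1
  set X := M.closure (A \ {e}) with hX
  -- `B \ X` is nonempty
  have hBX : (B \ X).Nonempty := by
    rw [nonempty_iff_ne_empty]
    intro h
    have hBsub : B ⊆ X := by
      rwa [diff_eq_empty] at h
    have : M.closure B ⊆ X := by
      have := M.closure_subset_closure hBsub
      rwa [M.closure_closure] at this
    rw [hB.closure_eq] at this
    exact heX (this heE)
  -- there is some `f ∈ B \ X` with `e ∉ M.closure (B \ {f})`
  have hexists : ∃ f ∈ B \ X, e ∉ M.closure (B \ {f}) := by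
    by_contra hcon
    push_neg at hcon
    have hclinter : M.closure (⋂ f ∈ B \ X, (B \ {f})) = ⋂ f ∈ B \ X, M.closure (B \ {f}) := by
      refine M.closure_biInter_eq_biInter_closure_of_biUnion_indep hBX ?_
      exact hB.indep.subset (by simp [iUnion_subset_iff])
    have heInter : e ∈ M.closure (⋂ f ∈ B \ X, (B \ {f})) := by
      rw [hclinter]
      exact mem_iInter₂.2 hcon
    have hsub : (⋂ f ∈ B \ X, (B \ {f})) ⊆ X := by
      intro x hx
      rw [mem_iInter₂] at hx
      by_cases hxB : x ∈ B
      · by_contra hxX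
        exact (hx x ⟨hxB, hxX⟩).2 rfl
      · obtain ⟨g, hg⟩ := hBX
        exact absurd (hx g hg).1 hxB
    have : M.closure (⋂ f ∈ B \ X, (B \ {f})) ⊆ X := by
      have := M.closure_subset_closure hsub
      rwa [hX, M.closure_closure] at this
    exact heX (this heInter)
  obtain ⟨f, ⟨hfB, hfX⟩, hfcl⟩ := hexists
  have hfE : f ∈ M.E := hB.subset_ground hfB
  have hfe : f ≠ e := by rintro rfl; exact he.2 hfB
  have hfA : f ∉ A := by
    intro hfA
    exact hfX (M.subset_closure _ hAe.subset_ground ⟨hfA, hfe⟩)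
  -- first base
  have h1 : M.Indep (insert f (A \ {e})) := by
    rw [hAe.insert_indep_iff_of_notMem (fun h => hfA h.1)]
    exact ⟨hfE, hfX⟩
  have hbase1 : M.IsBase (insert f (A \ {e})) := hA.exchange_isBase_of_indep hfA h1
  -- second base
  have hBf : M.Indep (B \ {f}) := hB.indep.subset diff_subset
  have h2 : M.Indep (insert e (B \ {f})) := by
    rw [hBf.insert_indep_iff_of_notMem (fun h => he.2 h.1)]
    exact ⟨heE, hfcl⟩
  have hbase2 : M.IsBase ((insert e B) \ {f}) := by
    refine hB.exchange_isBase_of_indep' hfB he.2 ?_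
    rwa [← insert_diff_singleton_comm (Ne.symm hfe)]
  exact ⟨f, ⟨hfB, hfA⟩, hbase1, hbase2⟩
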